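/- Let G be a finite simple graph with a proper 2-coloring of its vertices black and white, let V = V1 ⊔ V2 be a partition of its vertex set, let G1 and G2 be the subgraphs of G induced on V1 and V2 respectively, and let E3 be the set of edges of G with one endpoint in V1 and one endpoint in V2. Assume every vertex of V1 incident to an edge of E3 is black, and assume the number of black vertices of V1 equals the number of white vertices of V1. Then the number of perfect matchings factorizes: M(G) = M(G1) · M(G2). -/

import Mathlib

open SimpleGraph

section aux

variable {V : Type*} [Fintype V] (G : SimpleGraph V)

/-- Core lemma: no crossing edges in a perfect matching. -/
lemma no_crossing
    (c : V → Bool)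
    (hproper : ∀ v w : V, G.Adj v w → c v ≠ c w)
    (V1 : Set V)
    (hblack : ∀ v ∈ V1, ∀ w, w ∉ V1 → G.Adj v w → c v = true)
    (hbalanced : {v ∈ V1 | c v = true}.ncard = {v ∈ V1 | c v = false}.ncard)
    {M : G.Subgraph} (hM : M.IsPerfectMatching)
    {v w : V} (hv : v ∈ V1) (hadj : M.Adj v w) : w ∈ V1 := by
  classical
  set B : Set V := {v ∈ V1 | c v = true} with hB
  set W : Set V := {v ∈ V1 | c v = false} with hW
  -- partner function
  have hmatch : ∀ x : V, ∃! y, M.Adj x y := fun x => hM.1 (hM.2 x)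
  let p : V → V := fun x => (hmatch x).choose
  have hp : ∀ x, M.Adj x (p x) := fun x => (hmatch x).choose_spec.1
  have hpu : ∀ x y, M.Adj x y → y = p x := fun x y h => (hmatch x).choose_spec.2 y h
  -- f : W → B
  have hfmem : ∀ x : W, p x.1 ∈ B := by
    rintro ⟨x, hx1, hxc⟩
    have hadj' : G.Adj x (p x) := M.adj_sub (hp x)
    have hcol : c (p x) = true := by
      have := hproper x (p x) hadj'
      rw [hxc] at this
      simpa using this.symm
    have hmem : p x ∈ V1 := by
      by_contra hnot
      have := hblack x hx1 (p x) hnot hadj'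
      rw [hxc] at this; exact absurd this (by simp)
    exact ⟨hmem, hcol⟩
  let f : W → B := fun x => ⟨p x.1, hfmem x⟩
  have hinj : Function.Injective f := by
    rintro ⟨x, hx⟩ ⟨y, hy⟩ hxy
    have h1 : M.Adj (p x) x := (hp x).symm
    have h2 : M.Adj (p x) y := by
      have : p y = p x := congrArg Subtype.val hxy |>.symm
      rw [← this]; exact (hp y).symm
    have := (hpu (p x) x h1).trans (hpu (p x) y h2).symm
    exact Subtype.ext this
  have hcard : Nat.card W = Nat.card B := by
    rw [Nat.card_coe_set_eq, Nat.card_coe_set_eq]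
    exact hbalanced.symm
  have hsurj : Function.Surjective f :=
    ((Nat.bijective_iff_injective_and_card f).mpr ⟨hinj, hcard⟩).2
  -- now the main argument
  by_contra hw
  have hcv : c v = true := hblack v hv w hw (M.adj_sub hadj)
  obtain ⟨⟨x, hx⟩, hfx⟩ := hsurj ⟨v, hv, hcv⟩
  have hpx : p x = v := congrArg Subtype.val hfx
  have hMx : M.Adj v x := by rw [← hpx]; exact (hp x).symm
  have : x = p v := hpu v x hMx
  have hwpv : w = p v := hpu v w hadj
  have hxw : w = x := hwpv.trans this.symm
  rw [hxw] at hw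
  exact hw hx.1

end aux

theorem graph_splitting_factorization {V : Type*} [Fintype V] (G : SimpleGraph V)
    (c : V → Bool)
    (hproper : ∀ v w : V, G.Adj v w → c v ≠ c w)
    (V1 : Set V)
    (hblack : ∀ v ∈ V1, ∀ w, w ∉ V1 → G.Adj v w → c v = true)
    (hbalanced : {v ∈ V1 | c v = true}.ncard = {v ∈ V1 | c v = false}.ncard) :
    Nat.card {M : G.Subgraph // M.IsPerfectMatching} =
      Nat.card {M : (G.induce V1).Subgraph // M.IsPerfectMatching} *
        Nat.card {M : (G.induce V1ᶜ).Subgraph // M.IsPerfectMatching} := by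
  classical
  have ncross : ∀ {M : G.Subgraph}, M.IsPerfectMatching →
      ∀ {v w : V}, v ∈ V1 → M.Adj v w → w ∈ V1 := fun {M} hM {v w} hv h =>
    no_crossing G c hproper V1 hblack hbalanced hM hv h
  -- crossing in the other direction
  have ncross' : ∀ {M : G.Subgraph}, M.IsPerfectMatching →
      ∀ {v w : V}, v ∉ V1 → M.Adj v w → w ∉ V1 := by
    intro M hM v w hv hadj hw
    exact hv (ncross hM hw hadj.symm)
  -- restriction of a perfect matching to a side
  let restr : ∀ (s : Set V), G.Subgraph → (G.induce s).Subgraph := fun s M =>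
    { verts := Set.univ
      Adj := fun a b => M.Adj a.1 b.1
      adj_sub := fun h => M.adj_sub h
      edge_vert := fun _ => Set.mem_univ _
      symm := ⟨fun a b h => M.adj_symm h⟩ }
  -- combination
  let comb : (G.induce V1).Subgraph → (G.induce V1ᶜ).Subgraph → G.Subgraph :=
    fun M1 M2 =>
    { verts := Set.univ
      Adj := fun v w => (∃ (hv : v ∈ V1) (hw : w ∈ V1), M1.Adj ⟨v, hv⟩ ⟨w, hw⟩) ∨
        (∃ (hv : v ∈ V1ᶜ) (hw : w ∈ V1ᶜ), M2.Adj ⟨v, hv⟩ ⟨w, hw⟩)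
      adj_sub := by
        rintro v w (⟨hv, hw, h⟩ | ⟨hv, hw, h⟩)
        · exact M1.adj_sub h
        · exact M2.adj_sub h
      edge_vert := fun _ => Set.mem_univ _
      symm := by
        constructor
        rintro v w (⟨hv, hw, h⟩ | ⟨hv, hw, h⟩)
        · exact Or.inl ⟨hw, hv, h.symm⟩
        · exact Or.inr ⟨hw, hv, h.symm⟩ }
  have restr_pm : ∀ {M : G.Subgraph} (hM : M.IsPerfectMatching) (s : Set V)
      (hside : ∀ {v w : V}, v ∈ s → M.Adj v w → w ∈ s),
      (restr s M).IsPerfectMatching := by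
    intro M hM s hside
    constructor
    · rintro ⟨v, hv⟩ -
      obtain ⟨w, hw, huniq⟩ := hM.1 (hM.2 v)
      refine ⟨⟨w, hside hv hw⟩, hw, ?_⟩
      rintro ⟨w', hw'⟩ h
      exact Subtype.ext (huniq w' h)
    · intro v; exact Set.mem_univ v
  have comb_pm : ∀ {M1 : (G.induce V1).Subgraph} {M2 : (G.induce V1ᶜ).Subgraph},
      M1.IsPerfectMatching → M2.IsPerfectMatching →
      (comb M1 M2).IsPerfectMatching := by
    intro M1 M2 h1 h2
    constructor
    · rintro v -
      by_cases hv : v ∈ V1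
      · obtain ⟨⟨w, hw⟩, hadj, huniq⟩ := h1.1 (h1.2 ⟨v, hv⟩)
        refine ⟨w, Or.inl ⟨hv, hw, hadj⟩, ?_⟩
        rintro w' (⟨hv', hw', h⟩ | ⟨hv', hw', h⟩)
        · have := huniq ⟨w', hw'⟩ (by exact h)
          exact congrArg Subtype.val this
        · exact absurd hv hv'
      · obtain ⟨⟨w, hw⟩, hadj, huniq⟩ := h2.1 (h2.2 ⟨v, hv⟩)
        refine ⟨w, Or.inr ⟨hv, hw, hadj⟩, ?_⟩
        rintro w' (⟨hv', hw', h⟩ | ⟨hv', hw', h⟩)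
        · exact absurd hv' hv
        · have := huniq ⟨w', hw'⟩ (by exact h)
          exact congrArg Subtype.val this
    · intro v; exact Set.mem_univ v
  let e : {M : G.Subgraph // M.IsPerfectMatching} ≃
      ({M : (G.induce V1).Subgraph // M.IsPerfectMatching} ×
       {M : (G.induce V1ᶜ).Subgraph // M.IsPerfectMatching}) :=
    { toFun := fun ⟨M, hM⟩ =>
        (⟨restr V1 M, restr_pm hM V1 (fun hv h => ncross hM hv h)⟩,
         ⟨restr V1ᶜ M, restr_pm hM V1ᶜ (fun hv h => ncross' hM hv h)⟩)
      invFun := fun ⟨⟨M1, h1⟩, ⟨M2, h2⟩⟩ => ⟨comb M1 M2, comb_pm h1 h2⟩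
      left_inv := by
        rintro ⟨M, hM⟩
        apply Subtype.ext
        apply SimpleGraph.Subgraph.ext
        · exact (Subgraph.isSpanning_iff.mp hM.2).symm
        · ext v w
          constructor
          · rintro (⟨hv, hw, h⟩ | ⟨hv, hw, h⟩) <;> exact h
          · intro h
            by_cases hv : v ∈ V1
            · exact Or.inl ⟨hv, ncross hM hv h, h⟩
            · exact Or.inr ⟨hv, ncross' hM hv h, h⟩
      right_inv := by
        rintro ⟨⟨M1, h1⟩, ⟨M2, h2⟩⟩
        refine Prod.ext (Subtype.ext ?_) (Subtype.ext ?_)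
        · apply SimpleGraph.Subgraph.ext
          · exact (Subgraph.isSpanning_iff.mp h1.2).symm
          · ext ⟨v, hv⟩ ⟨w, hw⟩
            constructor
            · rintro (⟨hv', hw', h⟩ | ⟨hv', hw', h⟩)
              · exact h
              · exact absurd hv hv'
            · intro h
              exact Or.inl ⟨hv, hw, h⟩
        · apply SimpleGraph.Subgraph.ext
          · exact (Subgraph.isSpanning_iff.mp h2.2).symm
          · ext ⟨v, hv⟩ ⟨w, hw⟩
            constructor
            · rintro (⟨hv', hw', h⟩ | ⟨hv', hw', h⟩)
              · exact absurd hv' hv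
              · exact h
            · intro h
              exact Or.inr ⟨hv, hw, h⟩ }
  rw [Nat.card_eq_of_bijective e e.bijective, Nat.card_prod]
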